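/- For every infinite paperfolding sequence, every factor of its run-length sequence of length at least 2 can be extended on the right to a factor by at most two distinct letters; that is, no factor of length ≥ 2 is followed by all three letters 1, 2, 3 at different occurrences. -/

import Mathlib

/-- Paperfolding word; instructions are given with the most recent (last) instruction first. -/
def foldAux : List ℤ → List ℤ
  | [] => []
  | a :: f => foldAux f ++ a :: (foldAux f).reverse.map (fun x => -x)

/-- `paper f` is the finite paperfolding word `P_f` for instructions `f = [f_0, f_1, …]`,
satisfying `P_ε = ε` and `P_{f·a} = P_f · a · (-P_f^R)`. -/
def paper (f : List ℤ) : List ℤ := foldAux f.reverse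

/-- The sequence of lengths of the maximal runs (maximal blocks of equal symbols) of `w`. -/
def runLengths (w : List ℤ) : List ℕ := (w.splitBy (fun a b => a == b)).map List.length

/-- `p` (indexed from 1) is the infinite paperfolding sequence with instructions `f`,
i.e. every finite paperfolding word of a prefix of `f` is a prefix of `p`. -/
def IsLimit (f : ℕ → ℤ) (p : ℕ → ℤ) : Prop :=
  ∀ m k, k < (paper ((List.range m).map f)).length →
    p (k + 1) = (paper ((List.range m).map f)).getD k 0

/-- `E` enumerates, in increasing order (`E 1 < E 2 < ⋯`, with the convention `E 0 = 0`),
the ending positions of the maximal runs of the sequence `p` (indexed from 1):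
position `m ≥ 1` ends a run iff `p m ≠ p (m+1)`. -/
def IsRunEnds (p : ℕ → ℤ) (E : ℕ → ℕ) : Prop :=
  E 0 = 0 ∧ StrictMono E ∧ ∀ m, 1 ≤ m → ((∃ n, 1 ≤ n ∧ E n = m) ↔ p m ≠ p (m + 1))

lemma foldAux_length : ∀ L : List ℤ, (foldAux L).length = 2 ^ L.length - 1
  | [] => rfl
  | a :: L => by
    have h := foldAux_length L
    have h2 : (0:ℕ) < 2 ^ L.length := by positivity
    simp [foldAux, h, List.length_append, pow_succ]
    omega

lemma negrev_getD (w : List ℤ) (j : ℕ) (hj : j < w.length) :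
    (w.reverse.map (fun x => -x)).getD j 0 = -(w.getD (w.length - 1 - j) 0) := by
  rw [List.getD_eq_getElem _ _ (by simpa using hj), List.getD_eq_getElem _ _ (by omega)]
  simp [List.getElem_reverse]

lemma foldAux_mem : ∀ L : List ℤ, (∀ x ∈ L, x = -1 ∨ x = 1) →
    ∀ x ∈ foldAux L, x = -1 ∨ x = 1
  | [] => by intro _ x hx; simp [foldAux] at hx
  | a :: L => by
    intro hL x hx
    simp only [foldAux, List.mem_append, List.mem_cons, List.mem_map, List.mem_reverse] at hx
    rcases hx with h | h | ⟨y, hy, rfl⟩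
    · exact foldAux_mem L (fun z hz => hL z (by simp [hz])) x h
    · exact hL x (by simp [h])
    · rcases foldAux_mem L (fun z hz => hL z (by simp [hz])) y hy with h | h <;> simp [h]

lemma foldAux_alt2 : ∀ (L : List ℤ) (i : ℕ), 2 ∣ i → i + 2 < (foldAux L).length →
    (foldAux L).getD (i + 2) 0 = -((foldAux L).getD i 0)
  | [] => by intro i _ h; simp [foldAux] at h
  | a :: L => by
    intro i hi h
    have hfa : foldAux (a :: L) = foldAux L ++ a :: (foldAux L).reverse.map (fun x => -x) := by
      simp [foldAux]
    set w := foldAux L with hw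
    set n := w.length with hn
    have hlen : (foldAux (a :: L)).length = 2 * n + 1 := by
      rw [hfa]; simp [← hn]; omega
    rw [hlen] at h
    have hn1 : 1 ≤ n := by omega
    have hnodd : n % 2 = 1 := by
      have h3 := foldAux_length L
      rw [← hw, ← hn] at h3
      have hL : L.length ≠ 0 := by
        intro h0; rw [h0] at h3; simp at h3; omega
      have h2 : 2 ∣ 2 ^ L.length := dvd_pow_self 2 hL
      omega
    rw [hfa]
    obtain ⟨s, rfl⟩ := hi
    by_cases h1 : 2 * s + 2 < n
    · rw [List.getD_append _ _ _ (2 * s + 2) (by omega), List.getD_append _ _ _ (2 * s) (by omega)]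
      exact foldAux_alt2 L (2 * s) ⟨s, rfl⟩ (by rw [← hw, ← hn]; omega)
    · by_cases h2 : 2 * s + 1 = n
      · rw [List.getD_append_right _ _ _ (2 * s + 2) (by omega),
            List.getD_append _ _ _ (2 * s) (by omega)]
        have e1 : 2 * s + 2 - n = 1 := by omega
        rw [e1, List.getD_cons_succ, negrev_getD w 0 (by omega)]
        simp only [← hn]
        congr 2
        omega
      · have hge : 2 * s ≥ n + 1 := by omega
        rw [List.getD_append_right _ _ _ (2 * s + 2) (by omega),
            List.getD_append_right _ _ _ (2 * s) (by omega)]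
        have e1 : 2 * s - n = (2 * s - n - 1) + 1 := by omega
        have e2 : 2 * s + 2 - n = (2 * s - n - 1 + 2) + 1 := by omega
        rw [e1, e2, List.getD_cons_succ, List.getD_cons_succ]
        set j := 2 * s - n - 1 with hj
        rw [negrev_getD w j (by omega), negrev_getD w (j + 2) (by omega)]
        simp only [← hn]
        have ih := foldAux_alt2 L (n - 1 - (j + 2)) (by omega) (by rw [← hw, ← hn]; omega)
        have hi0 : n - 1 - (j + 2) + 2 = n - 1 - j := by omega
        rw [hi0] at ih
        rw [ih]
        ring

lemma foldAux_alt4 : ∀ (L : List ℤ) (i : ℕ), i % 4 = 1 → i + 4 < (foldAux L).length →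
    (foldAux L).getD (i + 4) 0 = -((foldAux L).getD i 0)
  | [] => by intro i _ h; simp [foldAux] at h
  | a :: L => by
    intro i hi h
    have hfa : foldAux (a :: L) = foldAux L ++ a :: (foldAux L).reverse.map (fun x => -x) := by
      simp [foldAux]
    set w := foldAux L with hw
    set n := w.length with hn
    have hlen : (foldAux (a :: L)).length = 2 * n + 1 := by
      rw [hfa]; simp [← hn]; omega
    rw [hlen] at h
    have hn3 : 3 ≤ n := by omega
    have hnmod : n % 4 = 3 := by
      have h3 := foldAux_length L
      rw [← hw, ← hn] at h3
      have hL : 2 ≤ L.length := by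
        by_contra hc
        interval_cases hl : L.length <;> norm_num at h3 <;> omega
      have h2 : 4 ∣ 2 ^ L.length := by
        have : (2:ℕ) ^ 2 ∣ 2 ^ L.length := pow_dvd_pow 2 hL
        simpa using this
      omega
    rw [hfa]
    by_cases h1 : i + 4 < n
    · rw [List.getD_append _ _ _ (i + 4) (by omega), List.getD_append _ _ _ i (by omega)]
      exact foldAux_alt4 L i hi (by rw [← hw, ← hn]; omega)
    · by_cases h2 : i + 2 = n
      · rw [List.getD_append_right _ _ _ (i + 4) (by omega),
            List.getD_append _ _ _ i (by omega)]
        have e1 : i + 4 - n = 1 + 1 := by omega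
        rw [e1, List.getD_cons_succ, negrev_getD w 1 (by omega)]
        simp only [← hn]
        congr 2
        omega
      · have hge : i ≥ n + 1 := by omega
        rw [List.getD_append_right _ _ _ (i + 4) (by omega),
            List.getD_append_right _ _ _ i (by omega)]
        have e1 : i - n = (i - n - 1) + 1 := by omega
        have e2 : i + 4 - n = (i - n - 1 + 4) + 1 := by omega
        rw [e1, e2, List.getD_cons_succ, List.getD_cons_succ]
        set j := i - n - 1 with hj
        have hjmod : j % 4 = 1 := by omega
        rw [negrev_getD w j (by omega), negrev_getD w (j + 4) (by omega)]
        simp only [← hn]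
        have ih := foldAux_alt4 L (n - 1 - (j + 4)) (by omega) (by rw [← hw, ← hn]; omega)
        have hi0 : n - 1 - (j + 4) + 4 = n - 1 - j := by omega
        rw [hi0] at ih
        rw [ih]
        ring

lemma paper_len (f : ℕ → ℤ) (m : ℕ) :
    (paper ((List.range m).map f)).length = 2 ^ m - 1 := by
  unfold paper; rw [foldAux_length]; simp

theorem runSeq_at_most_two_extensions (f p : ℕ → ℤ) (E : ℕ → ℕ)
    (hf : ∀ n, f n = -1 ∨ f n = 1) (hp : IsLimit f p) (hE : IsRunEnds p E)
    (R : ℕ → ℕ) (hR : ∀ k, R k = E k - E (k - 1)) :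
    ∀ n, 2 ≤ n → ¬ ∃ i j k : ℕ, 1 ≤ i ∧ 1 ≤ j ∧ 1 ≤ k ∧
      (∀ t < n, R (i + t) = R (j + t) ∧ R (j + t) = R (k + t)) ∧
      R (i + n) = 1 ∧ R (j + n) = 2 ∧ R (k + n) = 3 := by
  obtain ⟨hE0, hEmono, hEiff⟩ := hE
  -- values of p are ±1
  have pval : ∀ q : ℕ, p (q + 1) = -1 ∨ p (q + 1) = 1 := by
    intro q
    have hlt : q < (paper ((List.range (q + 2)).map f)).length := by
      rw [paper_len]; have := Nat.lt_two_pow_self (n := q + 2); omega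
    rw [hp (q + 2) q hlt]
    unfold paper at hlt ⊢
    have hmem : (foldAux (List.map f (List.range (q + 2))).reverse).getD q 0 ∈
        foldAux (List.map f (List.range (q + 2))).reverse := by
      rw [List.getD_eq_getElem _ _ hlt]
      exact List.getElem_mem hlt
    refine foldAux_mem _ ?_ _ hmem
    intro x hx
    simp only [List.mem_reverse, List.mem_map, List.mem_range] at hx
    obtain ⟨nn, _, rfl⟩ := hx
    exact hf nn
  -- odd positions alternate
  have pA : ∀ s : ℕ, p (2 * s + 3) = -p (2 * s + 1) := by
    intro s
    have hlt : 2 * s + 2 < (paper ((List.range (2 * s + 4)).map f)).length := by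
      rw [paper_len]; have := Nat.lt_two_pow_self (n := 2 * s + 4); omega
    have h1 := hp (2 * s + 4) (2 * s + 2) hlt
    have h2 := hp (2 * s + 4) (2 * s) (by omega)
    rw [show 2 * s + 3 = 2 * s + 2 + 1 by ring, h1, show 2 * s + 1 = 2 * s + 0 + 1 by ring]
    rw [show 2 * s + 0 = 2 * s by ring, h2]
    unfold paper at hlt ⊢
    exact foldAux_alt2 _ (2 * s) ⟨s, rfl⟩ hlt
  -- positions ≡ 2 mod 4 alternate with step 4
  have pB : ∀ s : ℕ, p (4 * s + 6) = -p (4 * s + 2) := by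
    intro s
    have hlt : 4 * s + 5 < (paper ((List.range (4 * s + 8)).map f)).length := by
      rw [paper_len]; have := Nat.lt_two_pow_self (n := 4 * s + 8); omega
    have h1 := hp (4 * s + 8) (4 * s + 5) hlt
    have h2 := hp (4 * s + 8) (4 * s + 1) (by omega)
    rw [show 4 * s + 6 = 4 * s + 5 + 1 by ring, h1, show 4 * s + 2 = 4 * s + 1 + 1 by ring, h2]
    rw [show 4 * s + 5 = 4 * s + 1 + 4 by ring]
    unfold paper at hlt ⊢
    exact foldAux_alt4 _ (4 * s + 1) (by omega) (by omega)
  -- exactly one run end in each pair {2k+1, 2k+2}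
  have exone : ∀ s : ℕ, (p (2 * s + 1) ≠ p (2 * s + 2)) ↔ ¬(p (2 * s + 2) ≠ p (2 * s + 3)) := by
    intro s
    have hA := pA s
    have h1 := pval (2 * s)
    have h2 := pval (2 * s + 1)
    rw [show 2 * s + 0 + 1 = 2 * s + 1 by ring] at h1
    rw [show 2 * s + 1 + 1 = 2 * s + 2 by ring] at h2
    rw [hA]
    rcases h1 with h1 | h1 <;> rcases h2 with h2 | h2 <;> rw [h1, h2] <;> norm_num
  -- exactly one of b(2m+1), b(2m+3) via positions 4m+2, 4m+6
  have exone4 : ∀ m : ℕ, (p (4 * m + 2) ≠ p (4 * m + 3)) ↔ ¬(p (4 * m + 6) ≠ p (4 * m + 7)) := by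
    intro m
    have hB := pB m
    have hA1 := pA (2 * m + 2)
    have hA2 := pA (2 * m + 1)
    rw [show 2 * (2 * m + 2) + 3 = 4 * m + 7 by ring, show 2 * (2 * m + 2) + 1 = 4 * m + 5 by ring] at hA1
    rw [show 2 * (2 * m + 1) + 3 = 4 * m + 5 by ring, show 2 * (2 * m + 1) + 1 = 4 * m + 3 by ring] at hA2
    have h7 : p (4 * m + 7) = p (4 * m + 3) := by rw [hA1, hA2]; ring
    have h1 := pval (4 * m + 1)
    have h2 := pval (4 * m + 2)
    rw [show 4 * m + 1 + 1 = 4 * m + 2 by ring] at h1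
    rw [show 4 * m + 2 + 1 = 4 * m + 3 by ring] at h2
    rw [hB, h7]
    rcases h1 with h1 | h1 <;> rcases h2 with h2 | h2 <;> rw [h1, h2] <;> norm_num
  have hEpos : ∀ r : ℕ, 1 ≤ r → 1 ≤ E r := by
    intro r hr
    have := hEmono (show 0 < r from hr)
    omega
  have hSE : ∀ r : ℕ, 1 ≤ r → p (E r) ≠ p (E r + 1) := by
    intro r hr
    exact (hEiff (E r) (hEpos r hr)).1 ⟨r, hr, rfl⟩
  -- range of E
  have Erange : ∀ m : ℕ, E (m + 1) = 2 * m + 1 ∨ E (m + 1) = 2 * m + 2 := by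
    intro m
    induction m with
    | zero =>
      show E 1 = 2 * 0 + 1 ∨ E 1 = 2 * 0 + 2
      have hx : p 1 ≠ p 2 ∨ p 2 ≠ p 3 := by
        have := exone 0
        norm_num at this
        tauto
      have hm : ∃ m0, (1 ≤ m0 ∧ m0 ≤ 2) ∧ p m0 ≠ p (m0 + 1) := by
        rcases hx with h | h
        · exact ⟨1, ⟨le_refl _, by norm_num⟩, by norm_num; exact h⟩
        · exact ⟨2, ⟨by norm_num, le_refl _⟩, by norm_num; exact h⟩
      obtain ⟨m0, ⟨hm1, hm2⟩, hmS⟩ := hm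
      obtain ⟨r, hr1, hrE⟩ := (hEiff m0 hm1).2 hmS
      have h1 : E 1 ≤ E r := hEmono.monotone hr1
      have h2 := hEpos 1 (le_refl _)
      omega
    | succ m ih =>
      show E (m + 2) = 2 * (m + 1) + 1 ∨ E (m + 2) = 2 * (m + 1) + 2
      have hx : p (2 * m + 3) ≠ p (2 * m + 4) ∨ p (2 * m + 4) ≠ p (2 * m + 5) := by
        have := exone (m + 1)
        rw [show 2 * (m + 1) + 1 = 2 * m + 3 by ring, show 2 * (m + 1) + 2 = 2 * m + 4 by ring,
            show 2 * (m + 1) + 3 = 2 * m + 5 by ring] at this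
        tauto
      have hm : ∃ m0, (2 * m + 3 ≤ m0 ∧ m0 ≤ 2 * m + 4) ∧ p m0 ≠ p (m0 + 1) := by
        rcases hx with h | h
        · exact ⟨2 * m + 3, ⟨le_refl _, by omega⟩, by rw [show 2 * m + 3 + 1 = 2 * m + 4 by ring]; exact h⟩
        · exact ⟨2 * m + 4, ⟨by omega, le_refl _⟩, by rw [show 2 * m + 4 + 1 = 2 * m + 5 by ring]; exact h⟩
      obtain ⟨m0, ⟨hm1, hm2⟩, hmS⟩ := hm
      obtain ⟨r, hr1, hrE⟩ := (hEiff m0 (by omega)).2 hmS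
      have hrge : m + 2 ≤ r := by
        by_contra hc
        have : E r ≤ E (m + 1) := hEmono.monotone (by omega)
        omega
      have h1 : E (m + 2) ≤ E r := hEmono.monotone hrge
      have h2 : E (m + 1) < E (m + 2) := hEmono (Nat.lt_succ_self _)
      by_cases hc : E (m + 2) = 2 * m + 2
      · exfalso
        have hEn1 : E (m + 1) = 2 * m + 1 := by omega
        have s1 := hSE (m + 1) (by omega)
        have s2 := hSE (m + 2) (by omega)
        rw [hEn1] at s1
        rw [hc] at s2
        have := exone m
        rw [show 2 * m + 1 + 1 = 2 * m + 2 by ring] at s1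
        rw [show 2 * m + 2 + 1 = 2 * m + 3 by ring] at s2
        tauto
      · omega
  -- b r = E r + 1 - 2 r
  set b : ℕ → ℕ := fun r => E r + 1 - 2 * r with hbdef
  have hb01 : ∀ r, b r = 0 ∨ b r = 1 := by
    intro r
    cases r with
    | zero => right; simp [hbdef, hE0]
    | succ m => have := Erange m; simp only [hbdef]; omega
  have hEZ : ∀ r : ℕ, (E r : ℤ) = 2 * r - 1 + b r := by
    intro r
    cases r with
    | zero => simp [hbdef, hE0]
    | succ m => have := Erange m; simp only [hbdef]; push_cast; omega
  have hRZ : ∀ m : ℕ, (R (m + 1) : ℤ) = 2 + b (m + 1) - b m := by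
    intro m
    have h1 := hR (m + 1)
    simp only [Nat.add_sub_cancel] at h1
    have h2 := hEZ (m + 1)
    have h3 := hEZ m
    have h4 : E m < E (m + 1) := hEmono (Nat.lt_succ_self _)
    omega
  -- b at odd indices
  have hbS : ∀ r : ℕ, b (r + 1) = 1 ↔ p (2 * r + 2) ≠ p (2 * r + 3) := by
    intro r
    constructor
    · intro h
      have hEr : E (r + 1) = 2 * r + 2 := by
        have := Erange r; simp only [hbdef] at h; omega
      have := hSE (r + 1) (by omega)
      rw [hEr, show 2 * r + 2 + 1 = 2 * r + 3 by ring] at this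
      exact this
    · intro h
      obtain ⟨s, hs1, hsE⟩ := (hEiff (2 * r + 2) (by omega)).2 (by
        rw [show 2 * r + 2 + 1 = 2 * r + 3 by ring]; exact h)
      obtain ⟨s', rfl⟩ : ∃ s', s = s' + 1 := ⟨s - 1, by omega⟩
      have := Erange s'
      have hsr : s' = r := by omega
      subst hsr
      simp only [hbdef]
      omega
  have hbalt : ∀ m : ℕ, b (2 * m + 1) ≠ b (2 * m + 3) := by
    intro m
    have h1 := hbS (2 * m)
    have h2 := hbS (2 * m + 2)
    rw [show 2 * (2 * m) + 2 = 4 * m + 2 by ring, show 2 * (2 * m) + 3 = 4 * m + 3 by ring] at h1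
    rw [show 2 * (2 * m + 2) + 2 = 4 * m + 6 by ring, show 2 * (2 * m + 2) + 3 = 4 * m + 7 by ring] at h2
    rw [show 2 * m + 0 + 1 = 2 * m + 1 by ring] at h1
    rw [show 2 * m + 2 + 1 = 2 * m + 3 by ring] at h2
    have h4 := exone4 m
    have hv1 := hb01 (2 * m + 1)
    have hv2 := hb01 (2 * m + 3)
    intro heq
    rcases hv1 with h | h <;> rcases hv2 with h' | h'
    · rw [h] at h1; rw [h'] at h2; norm_num at h1 h2; tauto
    · omega
    · omega
    · rw [h] at h1; rw [h'] at h2; norm_num at h1 h2; tauto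
  -- main argument
  intro n hn ⟨i, j, k, hi1, hj1, hk1, hfac, hRi, hRj, hRk⟩
  -- claim 1: b (i + t) = 1 and b (k + t) = 0 for t ≤ n - 1
  have claim1 : ∀ d, d ≤ n - 1 → b (i + (n - 1 - d)) = 1 ∧ b (k + (n - 1 - d)) = 0 := by
    intro d
    induction d with
    | zero =>
      intro _
      have h1 := hRZ (i + n - 1)
      have h2 := hRZ (k + n - 1)
      rw [show i + n - 1 + 1 = i + n by omega] at h1
      rw [show k + n - 1 + 1 = k + n by omega] at h2
      rw [show i + (n - 1 - 0) = i + n - 1 by omega, show k + (n - 1 - 0) = k + n - 1 by omega]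
      have := hb01 (i + n)
      have := hb01 (i + n - 1)
      have := hb01 (k + n)
      have := hb01 (k + n - 1)
      omega
    | succ d ih =>
      intro hd
      have hih := ih (by omega)
      set t := n - 1 - (d + 1) with ht
      have he : n - 1 - d = t + 1 := by omega
      rw [he] at hih
      have hf2 := hfac (t + 1) (by omega)
      have hik : R (i + (t + 1)) = R (k + (t + 1)) := hf2.1.trans hf2.2
      have h1 := hRZ (i + t)
      have h2 := hRZ (k + t)
      rw [show i + t + 1 = i + (t + 1) by ring] at h1
      rw [show k + t + 1 = k + (t + 1) by ring] at h2
      have hb1 := hb01 (i + t)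
      have hb2 := hb01 (k + t)
      constructor <;> omega
  have claim1' : ∀ t, t ≤ n - 1 → b (i + t) = 1 ∧ b (k + t) = 0 := by
    intro t ht
    have := claim1 (n - 1 - t) (by omega)
    rwa [show n - 1 - (n - 1 - t) = t by omega] at this
  -- R j = 2 and b (j) = b (j - 1)
  have h0 := hfac 0 (by omega)
  simp only [Nat.add_zero] at h0
  have hrzi := hRZ (i - 1)
  have hrzj := hRZ (j - 1)
  have hrzk := hRZ (k - 1)
  rw [show i - 1 + 1 = i by omega] at hrzi
  rw [show j - 1 + 1 = j by omega] at hrzj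
  rw [show k - 1 + 1 = k by omega] at hrzk
  have hbi0 := claim1' 0 (by omega)
  simp only [Nat.add_zero] at hbi0
  have hstep : ∀ t, t ≤ n → b (j + t) = b (j + t - 1) := by
    intro t ht
    have hrz := hRZ (j + t - 1)
    rw [show j + t - 1 + 1 = j + t by omega] at hrz
    have hb1 := hb01 (j + t)
    have hb2 := hb01 (j + t - 1)
    have hRjt : R (j + t) = 2 := by
      by_cases ht0 : t = 0
      · subst ht0
        simp only [Nat.add_zero]
        have := hb01 (i - 1)
        have := hb01 (k - 1)
        have := hb01 (j - 1)
        have := hb01 j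
        omega
      · by_cases htn : t = n
        · subst htn; exact hRj
        · have hf2 := hfac t (by omega)
          have hbt := claim1' t (by omega)
          have hbt1 := claim1' (t - 1) (by omega)
          rw [show i + (t - 1) = i + t - 1 by omega] at hbt1
          have hrzit := hRZ (i + t - 1)
          rw [show i + t - 1 + 1 = i + t by omega] at hrzit
          omega
    omega
  -- b constant on [j-1, j+n]
  have hconst : ∀ s, s ≤ n + 1 → b (j - 1 + s) = b (j - 1) := by
    intro s
    induction s with
    | zero => intro _; rfl
    | succ s ih =>
      intro hs
      have h1 := ih (by omega)
      have h2 := hstep s (by omega)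
      rw [show j + s - 1 = j - 1 + s by omega] at h2
      rw [show j - 1 + (s + 1) = j + s by omega]
      omega
  rcases Nat.even_or_odd (j - 1) with ⟨m, hm⟩ | ⟨m, hm⟩
  · have c1 := hconst 1 (by omega)
    have c3 := hconst 3 (by omega)
    have := hbalt m
    rw [show 2 * m + 1 = j - 1 + 1 by omega, show 2 * m + 3 = j - 1 + 3 by omega] at this
    omega
  · have c0 := hconst 0 (by omega)
    have c2 := hconst 2 (by omega)
    have := hbalt m
    rw [show 2 * m + 1 = j - 1 + 0 by omega, show 2 * m + 3 = j - 1 + 2 by omega] at this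
    omega
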